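/- Let $A$ be a real symmetric $N \times N$ matrix with nonnegative entries, having at most $\rho$ nonzero entries in each row ($\rho \ge 1$), and let $\mu := \max_{p,q}|A_{pq}| > 0$. For each column $j$ define the vector $\psi_j \in \mathbb{C}^2 \otimes \mathbb{C}^2 \otimes \mathbb{C}^N \otimes \mathbb{C}^N$ by $\psi_j = \frac{1}{\sqrt{\rho}} \sum_{p : A_{pj} \ne 0} \left( \sqrt{A_{pj}/\mu}\, |0\rangle + \sqrt{1 - A_{pj}/\mu}\, |1\rangle \right) \otimes |0\rangle \otimes |p\rangle \otimes |j\rangle$, and for each row $k$ define $\chi_k = \frac{1}{\sqrt{\rho}} \sum_{p : A_{kp} \ne 0} |0\rangle \otimes \left( \sqrt{A_{kp}/\mu}\, |0\rangle + \sqrt{1 - A_{kp}/\mu}\, |1\rangle \right) \otimes |k\rangle \otimes |p\rangle$. Then for all $j, k$: $\langle \chi_k, \psi_j \rangle = \frac{A_{kj}}{\rho\, \mu}$, and $\|\psi_j\| \le 1$ and $\|\chi_k\| \le 1$, with equality when the corresponding row/column has exactly $\rho$ nonzero entries. -/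

import Mathlib

/-- Core identity of the `d`-sparse block encoding: for a real symmetric
nonnegative matrix `A` with at most `ρ` nonzeros per row and max entry `μ > 0`,
the prepared states `ψ_j` and `χ_k` satisfy `⟨χ_k, ψ_j⟩ = A_{kj}/(ρ μ)` and are
subnormalized, with norm exactly `1` when the corresponding column/row has
exactly `ρ` nonzero entries. -/
theorem d_sparse_state_overlap (N ρ : ℕ) (hN : 0 < N) (hρ : 1 ≤ ρ)
    (A : Matrix (Fin N) (Fin N) ℝ) (hsymm : A.IsSymm)
    (hnonneg : ∀ p q, 0 ≤ A p q)
    (hsparse : ∀ p, (Finset.univ.filter fun q => A p q ≠ 0).card ≤ ρ)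
    (μ : ℝ) (hμ : IsGreatest {x : ℝ | ∃ p q, x = |A p q|} μ) (hμpos : 0 < μ)
    (ψ χ : Fin N → EuclideanSpace ℂ (Fin 2 × Fin 2 × Fin N × Fin N))
    (hψ : ∀ j s t p q, ψ j (s, t, p, q) =
      if t = 0 ∧ q = j ∧ A p j ≠ 0 then
        ((((Real.sqrt ρ)⁻¹ *
          (if s = 0 then Real.sqrt (A p j / μ)
           else Real.sqrt (1 - A p j / μ))) : ℝ) : ℂ)
      else 0)
    (hχ : ∀ k s t p q, χ k (s, t, p, q) =
      if s = 0 ∧ p = k ∧ A k q ≠ 0 then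
        ((((Real.sqrt ρ)⁻¹ *
          (if t = 0 then Real.sqrt (A k q / μ)
           else Real.sqrt (1 - A k q / μ))) : ℝ) : ℂ)
      else 0) :
    (∀ j k, (inner ℂ (χ k) (ψ j) : ℂ) = ((A k j / (ρ * μ) : ℝ) : ℂ)) ∧
    (∀ j, ‖ψ j‖ ≤ 1) ∧ (∀ k, ‖χ k‖ ≤ 1) ∧
    (∀ j, (Finset.univ.filter fun p => A p j ≠ 0).card = ρ → ‖ψ j‖ = 1) ∧
    (∀ k, (Finset.univ.filter fun q => A k q ≠ 0).card = ρ → ‖χ k‖ = 1) := by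
  have hρR : (0:ℝ) < ρ := by exact_mod_cast hρ
  have hle : ∀ p q, A p q ≤ μ := fun p q => by
    have h := hμ.2 ⟨p, q, rfl⟩
    exact (le_abs_self _).trans h
  have hdiv0 : ∀ p q, 0 ≤ A p q / μ := fun p q => div_nonneg (hnonneg p q) hμpos.le
  have hdiv1 : ∀ p q, A p q / μ ≤ 1 := fun p q => (div_le_one hμpos).2 (hle p q)
  -- squared values
  have hsq1 : ∀ p q, ((Real.sqrt ρ)⁻¹ * Real.sqrt (A p q / μ))^2 = (ρ:ℝ)⁻¹ * (A p q / μ) := by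
    intro p q
    rw [mul_pow, ← Real.sqrt_inv, Real.sq_sqrt (by positivity), Real.sq_sqrt (hdiv0 p q)]
  have hsq2 : ∀ p q, ((Real.sqrt ρ)⁻¹ * Real.sqrt (1 - A p q / μ))^2
      = (ρ:ℝ)⁻¹ * (1 - A p q / μ) := by
    intro p q
    rw [mul_pow, ← Real.sqrt_inv, Real.sq_sqrt (by positivity),
      Real.sq_sqrt (by linarith [hdiv1 p q])]
  -- norms
  have normψ : ∀ j, ‖ψ j‖^2 = ((Finset.univ.filter fun p => A p j ≠ 0).card : ℝ) / ρ := by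
    intro j
    rw [EuclideanSpace.norm_eq, Real.sq_sqrt (by positivity)]
    rw [Fintype.sum_prod_type]
    simp only [Fintype.sum_prod_type, hψ, Fin.sum_univ_two]
    simp only [apply_ite (fun z : ℂ => ‖z‖^2), norm_zero, Complex.norm_real,
      Real.norm_eq_abs, sq_abs, zero_pow, if_pos rfl, one_ne_zero, if_neg (by decide : ¬(1:Fin 2) = 0)]
    simp only [if_true, if_false, true_and, false_and, ite_and, hsq1, hsq2, ne_eq,
      zero_pow, Finset.sum_ite_eq', Finset.mem_univ, Finset.sum_const_zero, add_zero, zero_add,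
      OfNat.ofNat_ne_zero, not_false_eq_true]
    rw [← Finset.sum_add_distrib]
    have step : ∀ x : Fin N,
        ((if ¬A x j = 0 then (ρ:ℝ)⁻¹ * (A x j / μ) else 0) +
          if ¬A x j = 0 then (ρ:ℝ)⁻¹ * (1 - A x j / μ) else 0) =
        if ¬A x j = 0 then (ρ:ℝ)⁻¹ else 0 := fun x => by split_ifs <;> ring
    simp_rw [step, ← Finset.sum_filter, Finset.sum_const, nsmul_eq_mul, div_eq_mul_inv]
  have normχ : ∀ k, ‖χ k‖^2 = ((Finset.univ.filter fun q => A k q ≠ 0).card : ℝ) / ρ := by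
    intro k
    rw [EuclideanSpace.norm_eq, Real.sq_sqrt (by positivity)]
    rw [Fintype.sum_prod_type]
    simp only [Fintype.sum_prod_type, hχ, Fin.sum_univ_two]
    simp only [apply_ite (fun z : ℂ => ‖z‖^2), norm_zero, Complex.norm_real,
      Real.norm_eq_abs, sq_abs, zero_pow, if_pos rfl, one_ne_zero,
      if_neg (by decide : ¬(1:Fin 2) = 0)]
    simp only [if_true, if_false, true_and, false_and, ite_and, hsq1, hsq2, ne_eq,
      zero_pow, Finset.sum_ite_eq', Finset.mem_univ, Finset.sum_const_zero, add_zero, zero_add,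
      OfNat.ofNat_ne_zero, not_false_eq_true]
    have pull : ∀ (f : Fin N → ℝ),
        (∑ x : Fin N, ∑ x_1 : Fin N, if x = k then f x_1 else 0) = ∑ x_1, f x_1 := by
      intro f
      rw [Finset.sum_comm]
      simp
    rw [pull, pull, ← Finset.sum_add_distrib]
    have step : ∀ x : Fin N,
        ((if ¬A k x = 0 then (ρ:ℝ)⁻¹ * (A k x / μ) else 0) +
          if ¬A k x = 0 then (ρ:ℝ)⁻¹ * (1 - A k x / μ) else 0) =
        if ¬A k x = 0 then (ρ:ℝ)⁻¹ else 0 := fun x => by split_ifs <;> ring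
    simp_rw [step, ← Finset.sum_filter, Finset.sum_const, nsmul_eq_mul, div_eq_mul_inv]
  have hinner : ∀ j k, (inner ℂ (χ k) (ψ j) : ℂ) = ((A k j / (ρ * μ) : ℝ) : ℂ) := by
    intro j k
    rw [PiLp.inner_apply]
    simp only [RCLike.inner_apply, Fintype.sum_prod_type, hψ, hχ, Fin.sum_univ_two,
      if_pos rfl, if_neg (by decide : ¬(1:Fin 2) = 0), true_and, false_and, if_true, if_false,
      map_zero, zero_mul, mul_zero, Complex.conj_ofReal, ite_and, mul_ite, ite_mul,
      Finset.sum_ite_eq', Finset.mem_univ, Finset.sum_const_zero, add_zero, zero_add, ne_eq]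
    simp only [apply_ite (starRingEnd ℂ), map_zero, Complex.conj_ofReal, ite_mul, zero_mul,
      Finset.sum_const_zero, add_zero, ite_self]
    rw [Finset.sum_eq_single k (fun b _ hb => by simp [hb]) (fun h => absurd (Finset.mem_univ k) h)]
    by_cases h : A k j = 0
    · simp [h]
    · simp only [h, not_false_eq_true, if_true, ite_true]
      rw [← Complex.ofReal_mul, ← sq, hsq1]
      have : (ρ:ℝ)⁻¹ * (A k j / μ) = A k j / (ρ * μ) := by ring
      rw [this]
  have hs : ∀ p q, A q p = A p q := fun p q => by
    have := congrFun (congrFun hsymm p) q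
    simpa [Matrix.transpose_apply] using this
  have hcardψ : ∀ j, ((Finset.univ.filter fun p => A p j ≠ 0).card) ≤ ρ := by
    intro j
    have he : (Finset.univ.filter fun p => A p j ≠ 0)
        = (Finset.univ.filter fun q => A j q ≠ 0) := by
      apply Finset.filter_congr
      intro p _
      rw [hs j p]
    rw [he]
    exact hsparse j
  refine ⟨hinner, fun j => ?_, fun k => ?_, fun j hj => ?_, fun k hk => ?_⟩
  · have h2 : ‖ψ j‖^2 ≤ 1 := by
      rw [normψ j, div_le_one hρR]
      exact_mod_cast hcardψ j
    nlinarith [norm_nonneg (ψ j)]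
  · have h2 : ‖χ k‖^2 ≤ 1 := by
      rw [normχ k, div_le_one hρR]
      exact_mod_cast hsparse k
    nlinarith [norm_nonneg (χ k)]
  · have h2 : ‖ψ j‖^2 = 1 := by rw [normψ j, hj, div_self hρR.ne']
    nlinarith [norm_nonneg (ψ j)]
  · have h2 : ‖χ k‖^2 = 1 := by rw [normχ k, hk, div_self hρR.ne']
    nlinarith [norm_nonneg (χ k)]
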